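/- If p : I → (0,∞) satisfies Σ_{i∈I} p(i) = 1, then the baseline cell probability satisfies p(i*) = (1 + Σ_{∅≠E⊆V} Σ_{i_E∈I_E*} exp(Σ_{∅≠F⊆E} θ_F(i_F)))^{−1}, where the outer sum runs over nonempty subsets E of V and over tuples i_E all of whose coordinates differ from baseline. -/

import Mathlib

open Finset

/-- The cell equal to `i` on `F` and to the baseline `b` off `F`. -/
def cellOn {V : Type} [DecidableEq V] {I : V → Type} (b : ∀ γ, I γ)
    (F : Finset V) (i : ∀ γ, I γ) : ∀ γ, I γ :=
  fun γ => if γ ∈ F then i γ else b γ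

/-- The support of a cell: the set of coordinates that are off baseline. -/
def cellSupport {V : Type} [Fintype V] [DecidableEq V] {I : V → Type}
    [∀ γ, DecidableEq (I γ)] (b : ∀ γ, I γ) (j : ∀ γ, I γ) : Finset V :=
  Finset.univ.filter (fun γ => j γ ≠ b γ)

/-- The log-linear interaction parameter `θ_E(i_E)` under baseline constraints. -/
noncomputable def theta {V : Type} [DecidableEq V] {I : V → Type} (b : ∀ γ, I γ)
    (p : (∀ γ, I γ) → ℝ) (E : Finset V) (i : ∀ γ, I γ) : ℝ :=
  ∑ F ∈ E.powerset, (-1 : ℝ) ^ (E \ F).card * Real.log (p (cellOn b F i))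

lemma aux_inner {α : Type} [DecidableEq α] (E G : Finset α) (hG : G ⊆ E) :
    ∑ F ∈ E.powerset.filter (fun F => G ⊆ F), (-1 : ℝ) ^ (F \ G).card
      = if G = E then 1 else 0 := by
  calc ∑ F ∈ E.powerset.filter (fun F => G ⊆ F), (-1 : ℝ) ^ (F \ G).card
      = ∑ H ∈ (E \ G).powerset, (-1 : ℝ) ^ H.card := by
        refine Finset.sum_nbij' (fun F => F \ G) (fun H => H ∪ G) ?_ ?_ ?_ ?_ ?_
        · intro F hF
          simp only [mem_filter, mem_powerset] at hF ⊢
          exact sdiff_subset_sdiff hF.1 (subset_refl _)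
        · intro H hH
          simp only [mem_filter, mem_powerset] at hH ⊢
          exact ⟨union_subset (hH.trans sdiff_subset) hG, subset_union_right⟩
        · intro F hF
          simp only [mem_filter, mem_powerset] at hF
          exact sdiff_union_of_subset hF.2
        · intro H hH
          simp only [mem_powerset] at hH
          show (H ∪ G) \ G = H
          rw [union_sdiff_right]
          exact sdiff_eq_self_of_disjoint ((sdiff_disjoint (s := G) (t := E)).mono_left hH)
        · intros; rfl
    _ = if E \ G = ∅ then 1 else 0 := by exact_mod_cast Finset.sum_powerset_neg_one_pow_card (x := E \ G)
    _ = if G = E then 1 else 0 := by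
        congr 1
        simp only [eq_iff_iff, sdiff_eq_empty_iff_subset]
        exact ⟨fun h => subset_antisymm hG h, fun h => h ▸ subset_refl _⟩

lemma sum_theta_eq {V : Type} [DecidableEq V] {I : V → Type} (b : ∀ γ, I γ)
    (p : (∀ γ, I γ) → ℝ) (E : Finset V) (j : ∀ γ, I γ) :
    ∑ F ∈ E.powerset, theta b p F j = Real.log (p (cellOn b E j)) := by
  unfold theta
  set L : Finset V → ℝ := fun G => Real.log (p (cellOn b G j)) with hL
  calc ∑ F ∈ E.powerset, ∑ G ∈ F.powerset, (-1 : ℝ) ^ (F \ G).card * L G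
      = ∑ F ∈ E.powerset, ∑ G ∈ E.powerset,
          (if G ⊆ F then (-1 : ℝ) ^ (F \ G).card * L G else 0) := by
        refine Finset.sum_congr rfl fun F hF => ?_
        have hpow : E.powerset.filter (fun G => G ⊆ F) = F.powerset := by
          ext G
          simp only [mem_filter, mem_powerset]
          exact ⟨fun h => h.2, fun h => ⟨h.trans (Finset.mem_powerset.mp hF), h⟩⟩
        rw [← Finset.sum_filter, hpow]
    _ = ∑ G ∈ E.powerset, ∑ F ∈ E.powerset,
          (if G ⊆ F then (-1 : ℝ) ^ (F \ G).card * L G else 0) := Finset.sum_comm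
    _ = ∑ G ∈ E.powerset, (∑ F ∈ E.powerset.filter (fun F => G ⊆ F),
          (-1 : ℝ) ^ (F \ G).card) * L G := by
        refine Finset.sum_congr rfl fun G hG => ?_
        rw [Finset.sum_filter, Finset.sum_mul]
        refine Finset.sum_congr rfl fun F hF => ?_
        split <;> simp
    _ = ∑ G ∈ E.powerset, (if G = E then (1:ℝ) else 0) * L G := by
        refine Finset.sum_congr rfl fun G hG => ?_
        rw [aux_inner E G (Finset.mem_powerset.mp hG)]
    _ = L E := by
        simp only [ite_mul, one_mul, zero_mul]
        rw [Finset.sum_ite_eq' E.powerset E (fun G => L G)]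
        simp

lemma cellOn_of_support {V : Type} [Fintype V] [DecidableEq V] {I : V → Type}
    [∀ γ, DecidableEq (I γ)] (b j : ∀ γ, I γ) :
    cellOn b (cellSupport b j) j = j := by
  funext γ
  unfold cellOn cellSupport
  by_cases h : j γ = b γ <;> simp [h]


/-- The baseline cell probability expressed in terms of the log-linear parameters:
`p(i*) = (1 + Σ_{∅≠E⊆V} Σ_{i_E ∈ I_E*} exp (Σ_{∅≠F⊆E} θ_F(i_F)))⁻¹`.  A tuple
`i_E ∈ I_E*` is represented by the unique cell whose support is exactly `E`. -/
theorem baseline_prob_eq {V : Type} [Fintype V] [DecidableEq V]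
    {I : V → Type} [∀ γ, Fintype (I γ)] [∀ γ, DecidableEq (I γ)]
    (b : ∀ γ, I γ) (p : (∀ γ, I γ) → ℝ) (hp : ∀ i, 0 < p i)
    (hsum : ∑ i : (∀ γ, I γ), p i = 1) :
    p b = (1 + ∑ E ∈ (Finset.univ : Finset V).powerset.filter (· ≠ ∅),
      ∑ j ∈ Finset.univ.filter (fun j : (∀ γ, I γ) => cellSupport b j = E),
        Real.exp (∑ F ∈ E.powerset.filter (· ≠ ∅), theta b p F j))⁻¹ := by
  -- step 1: inner exp equals p j / p b
  have key : ∀ (E : Finset V), E ≠ ∅ → ∀ j, cellSupport b j = E →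
      Real.exp (∑ F ∈ E.powerset.filter (· ≠ ∅), theta b p F j) = p j / p b := by
    intro E hE j hj
    have hsplit := Finset.sum_filter_add_sum_filter_not E.powerset (· ≠ ∅)
      (fun F => theta b p F j)
    have hfull : ∑ F ∈ E.powerset, theta b p F j = Real.log (p j) := by
      rw [sum_theta_eq, ← hj, cellOn_of_support]
    have hflt : E.powerset.filter (fun F => ¬ F ≠ ∅) = {∅} := by
      ext F
      simp only [Finset.mem_filter, Finset.mem_powerset, Finset.mem_singleton,
        not_not]
      exact ⟨fun h => h.2, fun h => ⟨h ▸ Finset.empty_subset E, h⟩⟩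
    have hth0 : theta b p ∅ j = Real.log (p b) := by
      unfold theta
      simp only [Finset.powerset_empty, Finset.sum_singleton, Finset.sdiff_empty,
        Finset.card_empty, pow_zero, one_mul]
      have : cellOn b ∅ j = b := by
        funext γ; simp [cellOn]
      rw [this]
    rw [hflt, Finset.sum_singleton, hth0, hfull] at hsplit
    have : ∑ F ∈ E.powerset.filter (· ≠ ∅), theta b p F j
        = Real.log (p j) - Real.log (p b) := by linarith
    rw [this, Real.exp_sub, Real.exp_log (hp j), Real.exp_log (hp b)]
  -- step 2: collapse double sum
  have hdouble : ∑ E ∈ (Finset.univ : Finset V).powerset.filter (· ≠ ∅),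
      ∑ j ∈ Finset.univ.filter (fun j : (∀ γ, I γ) => cellSupport b j = E),
        Real.exp (∑ F ∈ E.powerset.filter (· ≠ ∅), theta b p F j)
      = ∑ j ∈ Finset.univ.filter (fun j : (∀ γ, I γ) => j ≠ b), p j / p b := by
    rw [← Finset.sum_fiberwise_of_maps_to (g := fun j => cellSupport b j)
      (t := (Finset.univ : Finset V).powerset.filter (· ≠ ∅))
      (f := fun j => p j / p b) ?_]
    · refine Finset.sum_congr rfl fun E hE => ?_
      simp only [Finset.mem_filter, Finset.mem_powerset] at hE
      rw [Finset.filter_filter]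
      refine Finset.sum_congr ?_ fun j hj => ?_
      · ext j
        simp only [Finset.mem_filter, Finset.mem_univ, true_and]
        refine ⟨fun h => ⟨?_, h⟩, fun h => h.2⟩
        intro hjb
        apply hE.2
        rw [← h, hjb]
        ext γ
        simp [cellSupport]
      · simp only [Finset.mem_filter] at hj
        exact key E hE.2 j hj.2.2
    · intro j hj
      simp only [Finset.mem_filter, Finset.mem_univ, true_and] at hj ⊢
      refine ⟨Finset.mem_powerset.mpr (Finset.subset_univ _), ?_⟩
      intro h
      apply hj
      funext γ
      by_contra hγ
      have : γ ∈ cellSupport b j := by simp [cellSupport, hγ]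
      rw [h] at this
      exact absurd this (Finset.notMem_empty γ)
  -- step 3: sum of p j over j ≠ b
  have hrest : ∑ j ∈ Finset.univ.filter (fun j : (∀ γ, I γ) => j ≠ b), p j
      = 1 - p b := by
    have := Finset.sum_filter_add_sum_filter_not (Finset.univ : Finset (∀ γ, I γ))
      (fun j => j ≠ b) p
    rw [hsum] at this
    have h2 : (Finset.univ : Finset (∀ γ, I γ)).filter (fun j => ¬ j ≠ b) = {b} := by
      ext j; simp
    rw [h2, Finset.sum_singleton] at this
    linarith
  rw [hdouble, ← Finset.sum_div, hrest]
  have hb := hp b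
  field_simp
  ring
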